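/- Let H be an r×n integer matrix in Hermite normal form of rank r. If H is decomposable, then there exist a permutation matrix P (of size r) and a permutation matrix Q (of size n) such that Pᵀ H Q decomposes into a direct sum of matrices. Conversely, if such permutation matrices exist then H is decomposable. -/

import Mathlib

open Matrix

/-- `M` is block-diagonal with a top-left `k × l` block and a complementary
bottom-right block: all entries outside these two blocks vanish. -/
def IsBlockSplit {m n : ℕ} (M : Matrix (Fin m) (Fin n) ℤ) (k l : ℕ) : Prop :=
  ∀ (i : Fin m) (j : Fin n),
    (((i : ℕ) < k ∧ l ≤ (j : ℕ)) ∨ (k ≤ (i : ℕ) ∧ (j : ℕ) < l)) → M i j = 0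

/-- An integer matrix is decomposable if, after multiplying by the inverse of a
unimodular matrix on the left and a permutation matrix on the right, it becomes
a nontrivial block-diagonal direct sum. -/
def Decomposable {m n : ℕ} (A : Matrix (Fin m) (Fin n) ℤ) : Prop :=
  ∃ (P : Matrix (Fin m) (Fin m) ℤ) (σ : Equiv.Perm (Fin n)) (k l : ℕ),
    IsUnit P.det ∧ 0 < k ∧ k < m ∧ 0 < l ∧ l < n ∧
      IsBlockSplit (P⁻¹ * A * σ.permMatrix ℤ) k l

/-- A square integer matrix is reducible if conjugating by a permutation matrix
makes it a nontrivial block-diagonal direct sum of square matrices. -/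
def Reducible {n : ℕ} (B : Matrix (Fin n) (Fin n) ℤ) : Prop :=
  ∃ (σ : Equiv.Perm (Fin n)) (s : ℕ), 0 < s ∧ s < n ∧
    IsBlockSplit ((σ.permMatrix ℤ)ᵀ * B * σ.permMatrix ℤ) s s

/-- Hermite normal form: row echelon with positive pivots strictly dominating the
nonnegative entries above them, and zero rows at the bottom. -/
def IsHermiteNormalForm {m n : ℕ} (H : Matrix (Fin m) (Fin n) ℤ) : Prop :=
  ∃ (r : ℕ) (hr : r ≤ m) (piv : Fin r → Fin n),
    StrictMono piv ∧
    (∀ (i : Fin r) (j : Fin n), (j : ℕ) < (piv i : ℕ) → H (Fin.castLE hr i) j = 0) ∧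
    (∀ i : Fin r, 0 < H (Fin.castLE hr i) (piv i)) ∧
    (∀ k i : Fin r, k < i →
      0 ≤ H (Fin.castLE hr k) (piv i) ∧
        H (Fin.castLE hr k) (piv i) < H (Fin.castLE hr i) (piv i)) ∧
    (∀ i : Fin m, r ≤ (i : ℕ) → ∀ j, H i j = 0)

/-- `H` is the Hermite normal form of `A`. -/
def IsHNFOf {m n : ℕ} (H A : Matrix (Fin m) (Fin n) ℤ) : Prop :=
  IsHermiteNormalForm H ∧ ∃ P : Matrix (Fin m) (Fin m) ℤ, IsUnit P.det ∧ A = P * H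

/-- Rank of an integer matrix, computed over `ℚ`. -/
noncomputable def rankQ {m n : ℕ} (A : Matrix (Fin m) (Fin n) ℤ) : ℕ :=
  (A.map (Int.cast : ℤ → ℚ)).rank

lemma perm_sort {n : ℕ} (p : Fin n → Prop) [DecidablePred p] :
    ∃ σ : Equiv.Perm (Fin n), ∀ j, p j ↔ (σ j : ℕ) < (Finset.univ.filter p).card := by
  classical
  rw [show (Finset.univ.filter p).card = Fintype.card {x // p x} from
    (Fintype.card_subtype p).symm]
  have hlm : Fintype.card {x // p x} + Fintype.card {x // ¬ p x} = n := by
    rw [← Fintype.card_sum, Fintype.card_congr (Equiv.sumCompl p), Fintype.card_fin]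
  refine ⟨(Equiv.sumCompl p).symm.trans
    ((Equiv.sumCongr (Fintype.equivFin _) (Fintype.equivFin _)).trans
      (finSumFinEquiv.trans (finCongr hlm))), fun j => ?_⟩
  by_cases hj : p j
  · simp only [hj, true_iff, Equiv.trans_apply]
    rw [Equiv.sumCompl_symm_apply_of_pos hj]
    simp [finSumFinEquiv]
  · simp only [hj, false_iff, not_lt, Equiv.trans_apply]
    rw [Equiv.sumCompl_symm_apply_of_neg hj]
    simp [finSumFinEquiv]

lemma hnf_eval_min {r n : ℕ} (H : Fin r → Fin n → ℤ) (piv : Fin r → Fin n)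
    (hmono : StrictMono piv)
    (hleft : ∀ (i : Fin r) (j : Fin n), (j : ℕ) < (piv i : ℕ) → H i j = 0)
    (c : Fin r → ℤ) (a₀ : Fin r) (hmin : ∀ a, c a ≠ 0 → a₀ ≤ a) :
    (∑ a, c a • H a) (piv a₀) = c a₀ * H a₀ (piv a₀) := by
  rw [Finset.sum_apply]
  rw [Finset.sum_eq_single a₀]
  · simp
  · intro a _ hne
    rcases eq_or_ne (c a) 0 with h | h
    · simp [h]
    · have h1 : a₀ < a := lt_of_le_of_ne (hmin a h) (Ne.symm hne)
      have h2 : ((piv a₀ : Fin n) : ℕ) < ((piv a : Fin n) : ℕ) := hmono h1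
      simp [hleft a (piv a₀) h2]
  · simp

lemma hnf_support_zero {r n : ℕ} (H : Fin r → Fin n → ℤ) (piv : Fin r → Fin n)
    (hmono : StrictMono piv)
    (hleft : ∀ (i : Fin r) (j : Fin n), (j : ℕ) < (piv i : ℕ) → H i j = 0)
    (hpos : ∀ i, 0 < H i (piv i))
    (hdom : ∀ k i, k < i → 0 ≤ H k (piv i) ∧ H k (piv i) < H i (piv i))
    (i : Fin r) (v : Fin n → ℤ)
    (hv : v ∈ Submodule.span ℤ (Set.range H))
    (hsub : ∀ j, v j = H i j ∨ v j = 0)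
    (hpiv : v (piv i) = 0) : v = 0 := by
  classical
  obtain ⟨c, hc⟩ := (Submodule.mem_span_range_iff_exists_fun ℤ).mp hv
  by_contra hne
  have hex : (Finset.univ.filter fun a => c a ≠ 0).Nonempty := by
    rw [Finset.filter_nonempty_iff]
    by_contra h
    push_neg at h
    apply hne
    funext j
    rw [← hc, Finset.sum_apply]
    apply Finset.sum_eq_zero
    intro a ha
    simp [h a ha]
  set a₀ := (Finset.univ.filter fun a => c a ≠ 0).min' hex with ha₀def
  have ha₀ : c a₀ ≠ 0 := by
    have := (Finset.univ.filter fun a => c a ≠ 0).min'_mem hex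
    simpa using this
  have hmin : ∀ a, c a ≠ 0 → a₀ ≤ a := by
    intro a ha
    exact Finset.min'_le _ _ (by simpa using ha)
  have heval : v (piv a₀) = c a₀ * H a₀ (piv a₀) := by
    rw [← hc]; exact hnf_eval_min H piv hmono hleft c a₀ hmin
  have hvne : v (piv a₀) ≠ 0 := by
    rw [heval]; exact mul_ne_zero ha₀ (hpos a₀).ne'
  have hvH : v (piv a₀) = H i (piv a₀) := by
    rcases hsub (piv a₀) with h | h
    · exact h
    · exact absurd h hvne
  have hpne : piv a₀ ≠ piv i := by
    intro h; rw [h, hpiv] at hvne; exact hvne rfl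
  have hgt : piv i < piv a₀ := by
    rcases lt_trichotomy (piv a₀) (piv i) with h | h | h
    · exact absurd (hleft i (piv a₀) h).symm (by rw [← hvH]; exact fun hh => hvne hh.symm)
    · exact absurd h hpne
    · exact h
  have hia : i < a₀ := hmono.lt_iff_lt.mp hgt
  obtain ⟨hd1, hd2⟩ := hdom i a₀ hia
  rw [← hvH, heval] at hd1 hd2
  rcases ha₀.lt_or_gt with h | h
  · nlinarith [hpos a₀]
  · have : 1 ≤ c a₀ := h
    nlinarith [hpos a₀]

lemma hnf_rows_indep {r n : ℕ} (H : Fin r → Fin n → ℤ) (piv : Fin r → Fin n)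
    (hmono : StrictMono piv)
    (hleft : ∀ (i : Fin r) (j : Fin n), (j : ℕ) < (piv i : ℕ) → H i j = 0)
    (hpos : ∀ i, 0 < H i (piv i))
    (c : Fin r → ℤ) (hc : ∑ a, c a • H a = 0) : ∀ a, c a = 0 := by
  classical
  by_contra h
  push_neg at h
  obtain ⟨b, hb⟩ := h
  have hex : (Finset.univ.filter fun a => c a ≠ 0).Nonempty := ⟨b, by simpa using hb⟩
  set a₀ := (Finset.univ.filter fun a => c a ≠ 0).min' hex with ha₀def
  have ha₀ : c a₀ ≠ 0 := by
    have := (Finset.univ.filter fun a => c a ≠ 0).min'_mem hex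
    simpa using this
  have hmin : ∀ a, c a ≠ 0 → a₀ ≤ a := fun a ha => Finset.min'_le _ _ (by simpa using ha)
  have heval := hnf_eval_min H piv hmono hleft c a₀ hmin
  rw [hc] at heval
  exact ha₀ (by
    have := heval.symm
    simpa using mul_eq_zero.mp (by simpa using this) |>.resolve_right (hpos a₀).ne')

lemma restrict_eq_sum {n r : ℕ} (G : Fin r → Fin n → ℤ) (S : Finset (Fin n)) (k : ℕ)
    (h1 : ∀ a : Fin r, (a : ℕ) < k → ∀ j ∉ S, G a j = 0)
    (h2 : ∀ a : Fin r, k ≤ (a : ℕ) → ∀ j ∈ S, G a j = 0)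
    (c : Fin r → ℤ) :
    (fun j => if j ∈ S then (∑ a, c a • G a) j else 0)
      = ∑ a : Fin r, (if (a : ℕ) < k then c a else 0) • G a := by
  funext j
  rw [Finset.sum_apply]
  by_cases hj : j ∈ S
  · simp only [hj, if_true, Finset.sum_apply]
    apply Finset.sum_congr rfl
    intro a _
    by_cases ha : (a : ℕ) < k
    · simp [ha]
    · simp [ha, h2 a (le_of_not_gt ha) j hj]
  · simp only [hj, if_false]
    symm
    rw [Finset.sum_apply]
    apply Finset.sum_eq_zero
    intro a _
    by_cases ha : (a : ℕ) < k
    · simp [ha, h1 a ha j hj]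
    · simp [ha]

lemma permMatrix_transpose_mul {n : ℕ} (σ : Equiv.Perm (Fin n)) :
    (σ.permMatrix ℤ)ᵀ * σ.permMatrix ℤ = 1 := by
  rw [Equiv.Perm.permMatrix, ← PEquiv.toMatrix_symm, ← PEquiv.toMatrix_trans,
    ← Equiv.toPEquiv_symm, ← Equiv.toPEquiv_trans]
  simp

lemma permMatrix_inv_eq_transpose {n : ℕ} (σ : Equiv.Perm (Fin n)) :
    (σ.permMatrix ℤ)⁻¹ = (σ.permMatrix ℤ)ᵀ :=
  Matrix.inv_eq_left_inv (permMatrix_transpose_mul σ)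


/-- an `r × n` matrix in Hermite normal form of rank `r` is decomposable
iff it decomposes via permutation matrices on both sides. -/
theorem hnf_decomposable_iff_perm_decomposable {r n : ℕ}
    (H : Matrix (Fin r) (Fin n) ℤ)
    (hHNF : IsHermiteNormalForm H) (hrank : rankQ H = r) :
    Decomposable H ↔
      ∃ (σ : Equiv.Perm (Fin r)) (τ : Equiv.Perm (Fin n)) (k l : ℕ),
        0 < k ∧ k < r ∧ 0 < l ∧ l < n ∧
          IsBlockSplit ((σ.permMatrix ℤ)ᵀ * H * τ.permMatrix ℤ) k l := by
  classical
  obtain ⟨r', hr', piv, hmono, hleft, hpos, hdom, hbot⟩ := hHNF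
  -- rows of H are linearly independent over ℚ
  have hli : LinearIndependent ℚ (H.map (Int.cast : ℤ → ℚ)) := by
    refine linearIndependent_iff_card_eq_finrank_span.mpr ?_
    rw [Set.finrank]
    have h2 := Matrix.rank_eq_finrank_span_row (H.map (Int.cast : ℤ → ℚ))
    simp only [rankQ] at hrank
    rw [Fintype.card_fin]
    exact hrank.symm.trans h2
  have hr'r : r' = r := by
    by_contra h
    have hlt : r' < r := lt_of_le_of_ne hr' h
    refine hli.ne_zero ⟨r', hlt⟩ ?_
    funext j
    simp [Matrix.map_apply, hbot ⟨r', hlt⟩ (le_refl r') j]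
  subst hr'r
  have hcast : ∀ i : Fin r', Fin.castLE hr' i = i := fun i => Fin.ext rfl
  simp only [hcast] at hleft hpos hdom
  constructor
  · rintro ⟨P, σ₀, k, l, hPdet, hk0, hkr, hl0, hln, hBS⟩
    set S : Finset (Fin n) := Finset.univ.filter (fun j => ((σ₀ j : Fin n) : ℕ) < l) with hSdef
    have hS : ∀ j, j ∈ S ↔ ((σ₀ j : Fin n) : ℕ) < l := by
      intro j; simp [hSdef]
    set G : Fin r' → Fin n → ℤ := fun a j => (P⁻¹ * H) a j with hGdef
    have hGB : ∀ a j, G a j = (P⁻¹ * H * σ₀.permMatrix ℤ) a (σ₀ j) := by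
      intro a j
      rw [Equiv.Perm.permMatrix, PEquiv.mul_toMatrix_toPEquiv]
      simp [hGdef, Matrix.submatrix_apply]
    have hG1 : ∀ a : Fin r', (a : ℕ) < k → ∀ j ∉ S, G a j = 0 := by
      intro a ha j hj
      rw [hGB]
      refine hBS a (σ₀ j) (Or.inl ⟨ha, ?_⟩)
      rw [hS] at hj; omega
    have hG2 : ∀ a : Fin r', k ≤ (a : ℕ) → ∀ j ∈ S, G a j = 0 := by
      intro a ha j hj
      rw [hGB]
      refine hBS a (σ₀ j) (Or.inr ⟨ha, ?_⟩)
      rw [hS] at hj; omega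
    have hGspan : ∀ a, G a ∈ Submodule.span ℤ (Set.range H) := by
      intro a
      have hGa : G a = ∑ b, P⁻¹ a b • H b := by
        funext j
        rw [Finset.sum_apply]
        simp [hGdef, Matrix.mul_apply]
      rw [hGa]
      exact Submodule.sum_mem _ fun b _ =>
        Submodule.smul_mem _ _ (Submodule.subset_span ⟨b, rfl⟩)
    have hPP : P * P⁻¹ = 1 := Matrix.mul_nonsing_inv P hPdet
    have hrow : ∀ i : Fin r', H i = ∑ a, P i a • G a := by
      intro i
      funext j
      have : H = P * (P⁻¹ * H) := by rw [← Matrix.mul_assoc, hPP, Matrix.one_mul]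
      conv_lhs => rw [this]
      rw [Finset.sum_apply]
      simp [Matrix.mul_apply, hGdef]
    have hxS : ∀ i : Fin r',
        (fun j => if j ∈ S then H i j else 0) ∈ Submodule.span ℤ (Set.range H) := by
      intro i
      have heq : (fun j => if j ∈ S then H i j else 0)
          = ∑ a : Fin r', (if (a : ℕ) < k then P i a else 0) • G a := by
        rw [← restrict_eq_sum G S k hG1 hG2 (fun a => P i a)]
        funext j
        by_cases hj : j ∈ S
        · simp only [hj, if_true]
          rw [hrow i]
        · simp [hj]
      rw [heq]
      exact Submodule.sum_mem _ fun a _ => Submodule.smul_mem _ _ (hGspan a)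
    have hxC : ∀ i : Fin r',
        (fun j => if j ∈ S then 0 else H i j) ∈ Submodule.span ℤ (Set.range H) := by
      intro i
      have heq : (fun j => if j ∈ S then (0 : ℤ) else H i j)
          = H i - fun j => if j ∈ S then H i j else 0 := by
        funext j
        by_cases hj : j ∈ S <;> simp [hj]
      rw [heq]
      exact Submodule.sub_mem _ (Submodule.subset_span ⟨i, rfl⟩) (hxS i)
    have hdich1 : ∀ i : Fin r', piv i ∈ S → ∀ j, j ∉ S → H i j = 0 := by
      intro i hpi j hj
      have hz := hnf_support_zero H piv hmono hleft hpos hdom i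
        (fun j => if j ∈ S then 0 else H i j) (hxC i)
        (fun j' => by by_cases hj' : j' ∈ S <;> simp [hj'])
        (by simp [hpi])
      have := congrFun hz j
      simpa [hj] using this
    have hdich2 : ∀ i : Fin r', piv i ∉ S → ∀ j, j ∈ S → H i j = 0 := by
      intro i hpi j hj
      have hz := hnf_support_zero H piv hmono hleft hpos hdom i
        (fun j => if j ∈ S then H i j else 0) (hxS i)
        (fun j' => by by_cases hj' : j' ∈ S <;> simp [hj'])
        (by simp [hpi])
      have := congrFun hz j
      simpa [hj] using this
    have hGnonzero : ∀ a : Fin r', ∃ j, G a j ≠ 0 := by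
      intro a
      by_contra h
      push_neg at h
      have hcoef : ∀ b, P⁻¹ a b = 0 := by
        apply hnf_rows_indep H piv hmono hleft hpos
        funext j
        rw [Finset.sum_apply]
        simp only [Pi.smul_apply, smul_eq_mul, Pi.zero_apply]
        rw [← Matrix.mul_apply]
        exact h j
      have hPP' : P⁻¹ * P = 1 := Matrix.nonsing_inv_mul P hPdet
      have h1 : (1 : Matrix (Fin r') (Fin r') ℤ) a a = 0 := by
        rw [← hPP', Matrix.mul_apply]
        apply Finset.sum_eq_zero
        intro b _
        rw [hcoef b, zero_mul]
      simp [Matrix.one_apply] at h1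
    have hexS : ∃ i : Fin r', piv i ∈ S := by
      by_contra h
      push_neg at h
      have hall : ∀ (i : Fin r') (j : Fin n), j ∈ S → H i j = 0 := fun i => hdich2 i (h i)
      have hr0 : 0 < r' := lt_trans hk0 hkr
      set a0 : Fin r' := ⟨0, hr0⟩ with ha0
      have hspan0 : ∀ j ∈ S, G a0 j = 0 := by
        obtain ⟨c, hc⟩ := (Submodule.mem_span_range_iff_exists_fun ℤ).mp (hGspan a0)
        intro j hj
        rw [← hc, Finset.sum_apply]
        apply Finset.sum_eq_zero
        intro b _
        simp [hall b j hj]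
      obtain ⟨j, hjne⟩ := hGnonzero a0
      by_cases hj : j ∈ S
      · exact hjne (hspan0 j hj)
      · exact hjne (hG1 a0 hk0 j hj)
    have hexC : ∃ i : Fin r', piv i ∉ S := by
      by_contra h
      push_neg at h
      have hall : ∀ (i : Fin r') (j : Fin n), j ∉ S → H i j = 0 := fun i => hdich1 i (h i)
      set ak : Fin r' := ⟨k, hkr⟩ with hak
      have hspan0 : ∀ j, j ∉ S → G ak j = 0 := by
        obtain ⟨c, hc⟩ := (Submodule.mem_span_range_iff_exists_fun ℤ).mp (hGspan ak)
        intro j hj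
        rw [← hc, Finset.sum_apply]
        apply Finset.sum_eq_zero
        intro b _
        simp [hall b j hj]
      obtain ⟨j, hjne⟩ := hGnonzero ak
      by_cases hj : j ∈ S
      · exact hjne (hG2 ak (le_refl k) j hj)
      · exact hjne (hspan0 j hj)
    obtain ⟨σ, hσ⟩ := perm_sort (fun i : Fin r' => piv i ∈ S)
    obtain ⟨τ, hτ⟩ := perm_sort (fun j : Fin n => j ∈ S)
    refine ⟨σ, τ, (Finset.univ.filter (fun i : Fin r' => piv i ∈ S)).card,
      (Finset.univ.filter (fun j : Fin n => j ∈ S)).card, ?_, ?_, ?_, ?_, ?_⟩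
    · obtain ⟨i, hi⟩ := hexS
      exact Finset.card_pos.mpr ⟨i, Finset.mem_filter.mpr ⟨Finset.mem_univ i, hi⟩⟩
    · obtain ⟨i0, hi0⟩ := hexC
      have := Fintype.card_subtype_lt (p := fun i : Fin r' => piv i ∈ S) hi0
      simpa [Fintype.card_subtype] using this
    · obtain ⟨j0, hj0⟩ := hexS
      exact Finset.card_pos.mpr ⟨piv j0, Finset.mem_filter.mpr ⟨Finset.mem_univ _, hj0⟩⟩
    · have hnot : σ₀.symm ⟨l, hln⟩ ∉ S := by
        rw [hS]
        simp
      have := Fintype.card_subtype_lt (p := fun j : Fin n => j ∈ S) hnot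
      simpa [Fintype.card_subtype] using this
    · have hentry : ∀ (i : Fin r') (j : Fin n),
          ((σ.permMatrix ℤ)ᵀ * H * τ.permMatrix ℤ) i j = H (σ.symm i) (τ.symm j) := by
        intro i j
        rw [show (σ.permMatrix ℤ)ᵀ = (σ.symm.toPEquiv).toMatrix by
          rw [Equiv.toPEquiv_symm, PEquiv.toMatrix_symm]]
        rw [Equiv.Perm.permMatrix, PEquiv.mul_toMatrix_toPEquiv, PEquiv.toMatrix_toPEquiv_mul]
        simp [Matrix.submatrix_apply]
      intro i j hcase
      rw [hentry]
      rcases hcase with ⟨hik, hjl⟩ | ⟨hik, hjl⟩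
      · refine hdich1 (σ.symm i) ((hσ (σ.symm i)).mpr ?_) (τ.symm j) (fun hmem => ?_)
        · simpa using hik
        · have := (hτ (τ.symm j)).mp hmem
          simp only [Equiv.apply_symm_apply] at this
          omega
      · refine hdich2 (σ.symm i) (fun hmem => ?_) (τ.symm j) ((hτ (τ.symm j)).mpr ?_)
        · have := (hσ (σ.symm i)).mp hmem
          simp only [Equiv.apply_symm_apply] at this
          omega
        · simpa using hjl
  · rintro ⟨σ, τ, k, l, hk0, hkr, hl0, hln, hBS⟩
    refine ⟨σ.permMatrix ℤ, τ, k, l, ?_, hk0, hkr, hl0, hln, ?_⟩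
    · rw [Matrix.det_permutation]
      exact Units.isUnit _
    · rw [permMatrix_inv_eq_transpose]
      exact hBS
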